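/- Let Λ and A_t be H×H matrix-valued functions on [0,T] with λ₂ := inf_t λ_min(Λ A_t) > 0, and let Q_t(I − S_t) be symmetric positive semidefinite with Q_T(I − S_T) positive semidefinite. Then the coupled forward–backward ODE system dz_t = (r z_t − Λ A_t p_t) dt, −dp_t = (r p_t + Q_t(I − S_t) z_t) dt, z_0 = 0, p_T = Q_T(I − S_T) z_T has only the trivial solution z ≡ 0, p ≡ 0. -/

import Mathlib

open Matrix

/-- The smallest eigenvalue of the symmetrization `(B + Bᵀ)/2` of a real matrix `B`,
expressed via the Rayleigh quotient (infimum of `xᵀ B x` over Euclidean unit vectors). -/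
noncomputable def lambdaMin {d : ℕ} (B : Matrix (Fin d) (Fin d) ℝ) : ℝ :=
  sInf {r : ℝ | ∃ x : Fin d → ℝ, x ⬝ᵥ x = 1 ∧ r = x ⬝ᵥ (B *ᵥ x)}

lemma dot_self_pos {d : ℕ} {x : Fin d → ℝ} (h : x ≠ 0) : 0 < x ⬝ᵥ x := by
  rcases lt_or_eq_of_le (Finset.sum_nonneg fun i _ => mul_self_nonneg (x i) : (0:ℝ) ≤ x ⬝ᵥ x)
    with h1 | h1
  · exact h1
  · exact absurd (dotProduct_self_eq_zero.mp h1.symm) h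

lemma dot_self_nonneg {d : ℕ} (x : Fin d → ℝ) : 0 ≤ x ⬝ᵥ x :=
  Finset.sum_nonneg fun i _ => mul_self_nonneg (x i)

lemma rayleigh_bddBelow {d : ℕ} (B : Matrix (Fin d) (Fin d) ℝ) :
    BddBelow {r : ℝ | ∃ x : Fin d → ℝ, x ⬝ᵥ x = 1 ∧ r = x ⬝ᵥ (B *ᵥ x)} := by
  refine ⟨-(∑ i, ∑ j, |B i j|), ?_⟩
  rintro a ⟨x, hx, rfl⟩
  have hxi : ∀ i, |x i| ≤ 1 := by
    intro i
    have h1 : x i * x i ≤ x ⬝ᵥ x :=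
      Finset.single_le_sum (f := fun j => x j * x j)
        (fun j _ => mul_self_nonneg _) (Finset.mem_univ i)
    rw [hx] at h1
    nlinarith [abs_nonneg (x i), sq_abs (x i)]
  have habs : |x ⬝ᵥ (B *ᵥ x)| ≤ ∑ i, ∑ j, |B i j| := by
    calc |x ⬝ᵥ (B *ᵥ x)| ≤ ∑ i, |x i * (B *ᵥ x) i| := Finset.abs_sum_le_sum_abs _ _
    _ ≤ ∑ i, ∑ j, |B i j| := by
        refine Finset.sum_le_sum fun i _ => ?_
        rw [abs_mul]
        calc |x i| * |(B *ᵥ x) i| ≤ 1 * |(B *ᵥ x) i| :=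
              mul_le_mul_of_nonneg_right (hxi i) (abs_nonneg _)
        _ = |∑ j, B i j * x j| := by rw [one_mul]; rfl
        _ ≤ ∑ j, |B i j * x j| := Finset.abs_sum_le_sum_abs _ _
        _ ≤ ∑ j, |B i j| := by
            refine Finset.sum_le_sum fun j _ => ?_
            rw [abs_mul]
            calc |B i j| * |x j| ≤ |B i j| * 1 :=
                  mul_le_mul_of_nonneg_left (hxi j) (abs_nonneg _)
            _ = |B i j| := mul_one _
  linarith [neg_abs_le (x ⬝ᵥ (B *ᵥ x))]

lemma rayleigh_lb {d : ℕ} {B : Matrix (Fin d) (Fin d) ℝ} {c : ℝ}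
    (hB : c ≤ lambdaMin B) (x : Fin d → ℝ) :
    c * (x ⬝ᵥ x) ≤ x ⬝ᵥ (B *ᵥ x) := by
  rcases eq_or_ne x 0 with rfl | hx
  · simp
  · have hxx : 0 < x ⬝ᵥ x := dot_self_pos hx
    set s := Real.sqrt (x ⬝ᵥ x) with hs_def
    have hs : 0 < s := Real.sqrt_pos.2 hxx
    have hss : s * s = x ⬝ᵥ x := Real.mul_self_sqrt hxx.le
    set u := s⁻¹ • x with hu_def
    have hu : u ⬝ᵥ u = 1 := by
      rw [hu_def, smul_dotProduct, dotProduct_smul, smul_eq_mul, smul_eq_mul, ← hss]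
      field_simp
    have hle : c ≤ u ⬝ᵥ (B *ᵥ u) :=
      hB.trans (csInf_le (rayleigh_bddBelow B) ⟨u, hu, rfl⟩)
    have huB : u ⬝ᵥ (B *ᵥ u) = s⁻¹ * (s⁻¹ * (x ⬝ᵥ (B *ᵥ x))) := by
      rw [hu_def, mulVec_smul, smul_dotProduct, dotProduct_smul, smul_eq_mul, smul_eq_mul]
    rw [huB] at hle
    have h2 : c * (s * s) ≤ x ⬝ᵥ (B *ᵥ x) := by
      have := mul_le_mul_of_nonneg_left hle (le_of_lt (mul_pos hs hs))
      calc c * (s * s) = (s * s) * c := by ring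
      _ ≤ (s * s) * (s⁻¹ * (s⁻¹ * (x ⬝ᵥ (B *ᵥ x)))) := this
      _ = x ⬝ᵥ (B *ᵥ x) := by field_simp
    rwa [hss] at h2

/-- Uniqueness for the forward–backward ODE system: with
`inf_t λ_min(Λ A_t) ≥ λ₂ > 0` and `Q_t(I − S_t)` symmetric positive semidefinite,
the system `dz = (r z − Λ A_t p) dt`, `−dp = (r p + Q_t(I−S_t) z) dt`,
`z₀ = 0`, `p_T = Q_T(I − S_T) z_T` admits only the trivial solution. -/
theorem fbode_only_trivial_solution
    {H : ℕ} (T r : ℝ) (hT : 0 ≤ T)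
    (Λ : Matrix (Fin H) (Fin H) ℝ) (A : ℝ → Matrix (Fin H) (Fin H) ℝ)
    (lam₂ : ℝ) (hlam₂ : 0 < lam₂)
    (hLA : ∀ t ∈ Set.Icc 0 T, lam₂ ≤ lambdaMin (Λ * A t))
    (QS : ℝ → Matrix (Fin H) (Fin H) ℝ)
    (hQS : ∀ t ∈ Set.Icc 0 T, (QS t).PosSemidef)
    (z p : ℝ → (Fin H → ℝ))
    (hz : ∀ t ∈ Set.Icc 0 T, HasDerivAt z (r • z t - (Λ * A t) *ᵥ p t) t)
    (hp : ∀ t ∈ Set.Icc 0 T, HasDerivAt p (-(r • p t + (QS t) *ᵥ z t)) t)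
    (hz0 : z 0 = 0) (hpT : p T = (QS T) *ᵥ z T) :
    ∀ t ∈ Set.Icc 0 T, z t = 0 ∧ p t = 0 := by
  -- trivial case T = 0
  rcases eq_or_lt_of_le hT with rfl | hT'
  · intro t ht
    have ht0 : t = 0 := le_antisymm ht.2 ht.1
    subst ht0
    refine ⟨hz0, ?_⟩
    rw [hpT, hz0, mulVec_zero]
  -- main case 0 < T
  set φ : ℝ → ℝ := fun t => z t ⬝ᵥ p t with hφ_def
  set D : ℝ → ℝ := fun t => -(p t ⬝ᵥ ((Λ * A t) *ᵥ p t)) - z t ⬝ᵥ (QS t *ᵥ z t) with hD_def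
  have hφ : ∀ t ∈ Set.Icc 0 T, HasDerivAt φ (D t) t := by
    intro t ht
    have hz_i := hasDerivAt_pi.1 (hz t ht)
    have hp_i := hasDerivAt_pi.1 (hp t ht)
    have hsum : HasDerivAt (fun s => ∑ i, z s i * p s i)
        (∑ i, ((r • z t - (Λ * A t) *ᵥ p t) i * p t i
          + z t i * (-(r • p t + (QS t) *ᵥ z t)) i)) t :=
      HasDerivAt.fun_sum fun i _ => (hz_i i).mul (hp_i i)
    have heq : (∑ i, ((r • z t - (Λ * A t) *ᵥ p t) i * p t i
          + z t i * (-(r • p t + (QS t) *ᵥ z t)) i)) = D t := by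
      rw [Finset.sum_add_distrib]
      have e1 : (∑ i, (r • z t - (Λ * A t) *ᵥ p t) i * p t i)
          = (r • z t - (Λ * A t) *ᵥ p t) ⬝ᵥ p t := rfl
      have e2 : (∑ i, z t i * (-(r • p t + (QS t) *ᵥ z t)) i)
          = z t ⬝ᵥ (-(r • p t + (QS t) *ᵥ z t)) := rfl
      rw [e1, e2, sub_dotProduct, smul_dotProduct, dotProduct_neg, dotProduct_add,
        dotProduct_smul, dotProduct_comm ((Λ * A t) *ᵥ p t) (p t), hD_def]
      simp only [smul_eq_mul]
      ring
    exact heq ▸ hsum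
  have hQz : ∀ t ∈ Set.Icc 0 T, 0 ≤ z t ⬝ᵥ (QS t *ᵥ z t) := fun t ht => by
    simpa using (hQS t ht).dotProduct_mulVec_nonneg (z t)
  have hMp : ∀ t ∈ Set.Icc 0 T, lam₂ * (p t ⬝ᵥ p t) ≤ p t ⬝ᵥ ((Λ * A t) *ᵥ p t) :=
    fun t ht => rayleigh_lb (hLA t ht) (p t)
  have hD_nonpos : ∀ t ∈ Set.Icc 0 T, D t ≤ 0 := by
    intro t ht
    have h1 := hMp t ht
    have h2 := hQz t ht
    have h3 : 0 ≤ lam₂ * (p t ⬝ᵥ p t) := mul_nonneg hlam₂.le (dot_self_nonneg _)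
    simp only [hD_def]
    linarith
  have hant : AntitoneOn φ (Set.Icc 0 T) := by
    refine antitoneOn_of_deriv_nonpos (convex_Icc 0 T)
      (fun t ht => ((hφ t ht).continuousAt).continuousWithinAt) ?_ ?_
    · intro t ht
      rw [interior_Icc] at ht
      exact ((hφ t (Set.Ioo_subset_Icc_self ht)).differentiableAt).differentiableWithinAt
    · intro t ht
      rw [interior_Icc] at ht
      rw [(hφ t (Set.Ioo_subset_Icc_self ht)).deriv]
      exact hD_nonpos t (Set.Ioo_subset_Icc_self ht)
  have hφ0 : φ 0 = 0 := by simp [hφ_def, hz0]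
  have hφT : 0 ≤ φ T := by
    simp only [hφ_def]
    rw [hpT]
    exact hQz T ⟨hT, le_refl T⟩
  have hφzero : ∀ t ∈ Set.Icc 0 T, φ t = 0 := by
    intro t ht
    refine le_antisymm ?_ ?_
    · have := hant (Set.left_mem_Icc.2 hT) ht ht.1
      rwa [hφ0] at this
    · exact le_trans hφT (hant ht (Set.right_mem_Icc.2 hT) ht.2)
  -- p vanishes on the open interval
  have hpIoo : ∀ t ∈ Set.Ioo 0 T, p t = 0 := by
    intro t ht
    have htIcc := Set.Ioo_subset_Icc_self ht
    have hev : φ =ᶠ[nhds t] fun _ => (0:ℝ) := by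
      filter_upwards [Ioo_mem_nhds ht.1 ht.2] with s hs
        using hφzero s (Set.Ioo_subset_Icc_self hs)
    have hD0 : D t = 0 :=
      (hφ t htIcc).unique ((hasDerivAt_const t (0:ℝ)).congr_of_eventuallyEq hev)
    have h1 := hMp t htIcc
    have h2 := hQz t htIcc
    have h3 := dot_self_nonneg (p t)
    have hD0' : -(p t ⬝ᵥ ((Λ * A t) *ᵥ p t)) - z t ⬝ᵥ (QS t *ᵥ z t) = 0 := hD0
    have hpp : p t ⬝ᵥ p t = 0 := by nlinarith
    exact dotProduct_self_eq_zero.mp hpp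
  -- p vanishes at the endpoints by continuity
  have hp0 : p 0 = 0 := by
    have hc : Filter.Tendsto p (nhdsWithin 0 (Set.Ioi 0)) (nhds (p 0)) :=
      ((hp 0 ⟨le_refl 0, hT⟩).continuousAt).continuousWithinAt
    have hev : ∀ᶠ s in nhdsWithin 0 (Set.Ioi 0), p s = 0 := by
      filter_upwards [Ioo_mem_nhdsGT_of_mem ⟨le_refl (0:ℝ), hT'⟩] with s hs using hpIoo s hs
    exact tendsto_nhds_unique hc (tendsto_const_nhds.congr' (hev.mono fun s hs => hs.symm))
  have hpTzero : p T = 0 := by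
    have hc : Filter.Tendsto p (nhdsWithin T (Set.Iio T)) (nhds (p T)) :=
      ((hp T ⟨hT, le_refl T⟩).continuousAt).continuousWithinAt
    have hev : ∀ᶠ s in nhdsWithin T (Set.Iio T), p s = 0 := by
      filter_upwards [Ioo_mem_nhdsLT_of_mem ⟨hT', le_refl T⟩] with s hs using hpIoo s hs
    exact tendsto_nhds_unique hc (tendsto_const_nhds.congr' (hev.mono fun s hs => hs.symm))
  have hpIcc : ∀ t ∈ Set.Icc 0 T, p t = 0 := by
    intro t ht
    rcases eq_or_lt_of_le ht.1 with h0 | h0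
    · rw [← h0]; exact hp0
    rcases eq_or_lt_of_le ht.2 with hTt | hTt
    · rw [hTt]; exact hpTzero
    exact hpIoo t ⟨h0, hTt⟩
  -- z solves z' = r z with z 0 = 0, hence z ≡ 0
  set g : ℝ → (Fin H → ℝ) := fun t => Real.exp (-r * t) • z t with hg_def
  have hg : ∀ t ∈ Set.Icc 0 T, HasDerivAt g 0 t := by
    intro t ht
    have he : HasDerivAt (fun s : ℝ => Real.exp (-r * s)) (-r * Real.exp (-r * t)) t := by
      have h1 : HasDerivAt (fun s : ℝ => -r * s) (-r) t := by
        simpa using (hasDerivAt_id t).const_mul (-r)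
      simpa [mul_comm] using h1.exp
    have hzt : HasDerivAt z (r • z t) t := by
      have := hz t ht
      rwa [hpIcc t ht, mulVec_zero, sub_zero] at this
    have hprod := he.smul hzt
    have : Real.exp (-r * t) • r • z t + (-r * Real.exp (-r * t)) • z t = 0 := by
      rw [smul_smul, ← add_smul]
      ring_nf
      simp
    rw [this] at hprod
    exact hprod
  have hgc : ContinuousOn g (Set.Icc 0 T) :=
    fun t ht => ((hg t ht).continuousAt).continuousWithinAt
  have hgconst := constant_of_has_deriv_right_zero hgc
    (fun t ht => (hg t (Set.Ico_subset_Icc_self ht)).hasDerivWithinAt)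
  have hzIcc : ∀ t ∈ Set.Icc 0 T, z t = 0 := by
    intro t ht
    have := hgconst t ht
    rw [hg_def] at this
    simp only [hz0, smul_zero] at this
    rcases smul_eq_zero.mp this with h | h
    · exact absurd h (Real.exp_ne_zero _)
    · exact h
  exact fun t ht => ⟨hzIcc t ht, hpIcc t ht⟩
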